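/- arXiv:0802.0852 — 3 statements merged into one kernel-verified Lean document; each statement's English description precedes it below -/
import Mathlib

section
/- Every quaternion q admits a polar representation with a complex 'modulus' and complex argument: there exist real numbers a, b, c, d such that q = (a + b·i) · exp((c + d·i)·j), where the product and exponential are taken in the quaternion algebra. -/
open scoped Quaternion

/-- The quaternion `w + x·i + y·j + z·k`. -/
def Qmk (w x y z : ℝ) : ℍ[ℝ] := ⟨w, x, y, z⟩

@[simp] lemma Qmk_re (w x y z : ℝ) : (Qmk w x y z).re = w := rfl
@[simp] lemma Qmk_imI (w x y z : ℝ) : (Qmk w x y z).imI = x := rfl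
@[simp] lemma Qmk_imJ (w x y z : ℝ) : (Qmk w x y z).imJ = y := rfl
@[simp] lemma Qmk_imK (w x y z : ℝ) : (Qmk w x y z).imK = z := rfl

lemma qnorm (c d : ℝ) : ‖Qmk 0 0 c d‖ = Real.sqrt (c^2 + d^2) := by
  rw [norm_eq_sqrt_real_inner, Quaternion.inner_self]
  simp [Qmk_re, Qmk_imI, Qmk_imJ, Qmk_imK, Quaternion.normSq_def']

lemma qexp (c d : ℝ) :
    NormedSpace.exp (Qmk 0 0 c d) =
      Qmk (Real.cos (Real.sqrt (c^2+d^2))) 0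
        ((Real.sin (Real.sqrt (c^2+d^2)) / Real.sqrt (c^2+d^2)) * c)
        ((Real.sin (Real.sqrt (c^2+d^2)) / Real.sqrt (c^2+d^2)) * d) := by
  rw [Quaternion.exp_of_re_eq_zero _ (by simp [Qmk_re]), qnorm]
  ext <;> simp [Qmk_re, Qmk_imI, Qmk_imJ, Qmk_imK]

lemma qmulj (c d : ℝ) : Qmk c d 0 0 * Qmk 0 0 1 0 = Qmk 0 0 c d := by
  ext <;> simp [Qmk_re, Qmk_imI, Qmk_imJ, Qmk_imK, Quaternion.re_mul, Quaternion.imI_mul, Quaternion.imJ_mul, Quaternion.imK_mul]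

lemma qmul (a b e g h : ℝ) : Qmk a b 0 0 * Qmk e 0 g h =
    Qmk (a*e) (b*e) (a*g - b*h) (a*h + b*g) := by
  ext <;>
    simp [Qmk_re, Qmk_imI, Qmk_imJ, Qmk_imK, Quaternion.re_mul, Quaternion.imI_mul, Quaternion.imJ_mul, Quaternion.imK_mul] <;>
    ring

set_option maxHeartbeats 1000000 in
/-- Every quaternion `q` admits a polar representation `q = (a + b·i) · exp((c + d·i)·j)`
with `a, b, c, d` real, where `(c + d·i)·j` is the quaternion product (equal to `c·j + d·k`). -/
theorem quaternion_polar_form (q : ℍ[ℝ]) :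
    ∃ a b c d : ℝ,
      q = Qmk a b 0 0 * NormedSpace.exp (Qmk c d 0 0 * Qmk 0 0 1 0) := by
  obtain ⟨w, x, y, z⟩ := q
  by_cases hv : y = 0 ∧ z = 0
  · refine ⟨w, x, 0, 0, ?_⟩
    rw [qmulj, qexp, qmul]
    obtain ⟨hy, hz⟩ := hv
    simp [Qmk_re, Qmk_imI, Qmk_imJ, Qmk_imK, Quaternion.ext_iff, hy, hz]
    rfl
  · have hm2 : (0:ℝ) < y^2 + z^2 := by
      rcases not_and_or.mp hv with h | h <;> positivity
    set m := Real.sqrt (y^2 + z^2) with hm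
    have hmpos : 0 < m := Real.sqrt_pos.mpr hm2
    have hmsq : m^2 = y^2 + z^2 := Real.sq_sqrt hm2.le
    by_cases hu : w = 0 ∧ x = 0
    · obtain ⟨hw, hx⟩ := hu
      refine ⟨m, 0, (Real.pi/2) * (y/m), (Real.pi/2) * (z/m), ?_⟩
      rw [qmulj, qexp, qmul]
      have h1 : (y/m)^2 + (z/m)^2 = 1 := by
        field_simp
        linear_combination -hmsq
      have hR : ((Real.pi/2) * (y/m))^2 + ((Real.pi/2) * (z/m))^2 = (Real.pi/2)^2 := by
        linear_combination ((Real.pi/2)^2) * h1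
      rw [hR, Real.sqrt_sq (by positivity)]
      apply QuaternionAlgebra.ext_iff.mpr
      simp only [Qmk_re, Qmk_imI, Qmk_imJ, Qmk_imK, hw, hx, Real.cos_pi_div_two, Real.sin_pi_div_two]
      have hπ : (0:ℝ) < Real.pi := Real.pi_pos
      refine ⟨by ring, by ring, ?_, ?_⟩ <;> field_simp <;> ring
    · have hn2 : (0:ℝ) < w^2 + x^2 := by
        rcases not_and_or.mp hu with h | h <;> positivity
      set n := Real.sqrt (w^2 + x^2) with hn
      have hnpos : 0 < n := Real.sqrt_pos.mpr hn2
      have hnsq : n^2 = w^2 + x^2 := Real.sq_sqrt hn2.le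
      set L := Real.sqrt (w^2 + x^2 + y^2 + z^2) with hL
      have hLpos : 0 < L := Real.sqrt_pos.mpr (by linarith)
      have hLsq : L^2 = w^2 + x^2 + y^2 + z^2 := Real.sq_sqrt (by linarith)
      have hnL : n < L := by
        rw [hn, hL]; exact Real.sqrt_lt_sqrt (by positivity) (by linarith)
      set r := Real.arccos (n/L) with hr
      have hrpos : 0 < r := Real.arccos_pos.mpr (by rw [div_lt_one hLpos]; exact hnL)
      have hd1 : (0:ℝ) ≤ n / L := by positivity
      have hcos : Real.cos r = n / L :=
        Real.cos_arccos (by linarith) (le_of_lt (by rw [div_lt_one hLpos]; exact hnL))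
      have hsin : Real.sin r = m / L := by
        rw [hr, Real.sin_arccos]
        rw [show 1 - (n/L)^2 = (m/L)^2 by
          field_simp
          linear_combination hLsq - hmsq - hnsq]
        exact Real.sqrt_sq (by positivity)
      refine ⟨w * L / n, x * L / n, (r/(m*n)) * (y*w + z*x), (r/(m*n)) * (z*w - y*x), ?_⟩
      rw [qmulj, qexp, qmul]
      have hR : ((r/(m*n)) * (y*w + z*x))^2 + ((r/(m*n)) * (z*w - y*x))^2 = r^2 := by
        field_simp
        linear_combination (-(w^2+x^2)) * hmsq + (-m^2) * hnsq
      rw [hR, Real.sqrt_sq hrpos.le]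
      apply QuaternionAlgebra.ext_iff.mpr
      simp only [Qmk_re, Qmk_imI, Qmk_imJ, Qmk_imK, hcos, hsin]
      refine ⟨?_, ?_, ?_, ?_⟩
      · field_simp
      · field_simp
      · field_simp
        linear_combination y * hnsq
      · field_simp
        linear_combination z * hnsq
end

section
/- Every unit quaternion with zero i-component lies in the image of the exponential restricted to the (j,k)-plane together with sign: for every quaternion u = α + γ·j + δ·k with α² + γ² + δ² = 1, there exist real numbers c and d such that u = exp(c·j + d·k). -/
open scoped Quaternion

noncomputable def jkQuat (c d : ℝ) : ℍ[ℝ] := ⟨0, 0, c, d⟩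

@[simp] lemma jkQuat_re (c d : ℝ) : (jkQuat c d).re = 0 := rfl
@[simp] lemma jkQuat_imI (c d : ℝ) : (jkQuat c d).imI = 0 := rfl
@[simp] lemma jkQuat_imJ (c d : ℝ) : (jkQuat c d).imJ = c := rfl
@[simp] lemma jkQuat_imK (c d : ℝ) : (jkQuat c d).imK = d := rfl

lemma norm_jkQuat (c d : ℝ) : ‖jkQuat c d‖ = Real.sqrt (c ^ 2 + d ^ 2) := by
  rw [norm_eq_sqrt_real_inner, Quaternion.inner_self]
  simp [jkQuat_re, jkQuat_imI, jkQuat_imJ, jkQuat_imK, Quaternion.normSq_def', sq]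

lemma re_jkQuat (c d : ℝ) : (jkQuat c d).re = 0 := rfl

/-- Every unit quaternion with zero i-component is the exponential of a quaternion in the
(j,k)-plane: if `u = α + γ·j + δ·k` with `α² + γ² + δ² = 1`, then there exist real `c`, `d`
with `u = exp (c·j + d·k)`. -/
theorem unit_jk_quaternion_mem_exp_image (α γ δ : ℝ)
    (h : α ^ 2 + γ ^ 2 + δ ^ 2 = 1) :
    ∃ c d : ℝ, (⟨α, 0, γ, δ⟩ : ℍ[ℝ]) = (NormedSpace.exp (⟨0, 0, c, d⟩ : ℍ[ℝ]) : ℍ[ℝ]) := by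
  rcases eq_or_lt_of_le (by positivity : (0:ℝ) ≤ γ ^ 2 + δ ^ 2) with hr | hr
  · have hγ : γ = 0 := by nlinarith [sq_nonneg γ, sq_nonneg δ]
    have hδ : δ = 0 := by nlinarith [sq_nonneg γ, sq_nonneg δ]
    subst hγ; subst hδ
    have hα : α = 1 ∨ α = -1 := by
      have h0 : (α - 1) * (α + 1) = 0 := by nlinarith
      rcases mul_eq_zero.mp h0 with h1 | h1
      · left; linarith
      · right; linarith
    rcases hα with hα | hα <;> subst hα
    · refine ⟨0, 0, ?_⟩
      show _ = NormedSpace.exp (jkQuat 0 0)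
      have h0 : jkQuat 0 0 = 0 := by ext <;> simp [jkQuat]
      rw [h0, NormedSpace.exp_zero]
      ext <;> simp
    · refine ⟨Real.pi, 0, ?_⟩
      show _ = NormedSpace.exp (jkQuat Real.pi 0)
      rw [Quaternion.exp_of_re_eq_zero _ (re_jkQuat _ _), norm_jkQuat]
      have hs : Real.sqrt (Real.pi ^ 2 + 0 ^ 2) = Real.pi := by
        simp [Real.sqrt_sq Real.pi_pos.le]
      rw [hs]
      ext <;> simp
  · set r := Real.sqrt (γ ^ 2 + δ ^ 2) with hrdef
    have hrpos : 0 < r := Real.sqrt_pos.mpr hr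
    have hα1 : -1 ≤ α := by nlinarith
    have hα2 : α ≤ 1 := by nlinarith
    set θ := Real.arccos α with hθdef
    have hcos : Real.cos θ = α := Real.cos_arccos hα1 hα2
    have hsin : Real.sin θ = r := by
      rw [hθdef, Real.sin_arccos, hrdef]
      congr 1; linarith
    have hθpos : 0 < θ := by
      rcases lt_or_eq_of_le (Real.arccos_nonneg α) with h' | h'
      · exact h'
      · exfalso
        have hs0 : Real.sin θ = 0 := by rw [hθdef, ← h', Real.sin_zero]
        rw [hsin] at hs0; linarith
    refine ⟨θ * γ / r, θ * δ / r, ?_⟩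
    show _ = NormedSpace.exp (jkQuat (θ * γ / r) (θ * δ / r))
    have hnorm : ‖jkQuat (θ * γ / r) (θ * δ / r)‖ = θ := by
      rw [norm_jkQuat]
      have hx : (θ * γ / r) ^ 2 + (θ * δ / r) ^ 2 = θ ^ 2 * ((γ ^ 2 + δ ^ 2) / r ^ 2) := by
        field_simp
      have hr2 : r ^ 2 = γ ^ 2 + δ ^ 2 := Real.sq_sqrt hr.le
      rw [hx, hr2, div_self (by positivity), mul_one, Real.sqrt_sq hθpos.le]
    rw [Quaternion.exp_of_re_eq_zero _ (re_jkQuat _ _), hnorm, hcos, hsin]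
    ext <;> simp <;> field_simp <;> ring
end

section
/- The polar representation q = A·exp(B·j) with A, B complex is not unique when the first two components of q vanish: the quaternion k admits the two distinct factorizations k = i·exp((π/2)·j) (i.e., A = i, B = π/2) and k = exp((π/2)·i·j) (i.e., A = 1, B = (π/2)·i), where i·j = k. -/
open scoped Quaternion

lemma normq (r : ℝ) (hr : 0 ≤ r) : ‖Qmk 0 0 r 0‖ = r := by
  have := Quaternion.normSq_eq_norm_mul_self (Qmk 0 0 r 0)
  have h2 : Quaternion.normSq (Qmk 0 0 r 0) = r * r := by
    rw [Quaternion.normSq_def']; simp [Qmk]; ring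
  nlinarith [norm_nonneg (Qmk 0 0 r 0)]

lemma normk (r : ℝ) (hr : 0 ≤ r) : ‖Qmk 0 0 0 r‖ = r := by
  have := Quaternion.normSq_eq_norm_mul_self (Qmk 0 0 0 r)
  have h2 : Quaternion.normSq (Qmk 0 0 0 r) = r * r := by
    rw [Quaternion.normSq_def']; simp [Qmk]; ring
  nlinarith [norm_nonneg (Qmk 0 0 0 r)]

/-- The quaternion `k` admits two distinct polar factorizations:
`k = i·exp((π/2)·j)` (i.e. `A = i`, `B = π/2`) and `k = exp((π/2)·i·j) = exp((π/2)·k)`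
(i.e. `A = 1`, `B = (π/2)·i`), so the polar representation is not unique. -/
theorem k_two_polar_factorizations :
    Qmk 0 0 0 1 = Qmk 0 1 0 0 * NormedSpace.exp (Qmk 0 0 (Real.pi / 2) 0) ∧
    Qmk 0 0 0 1 = (1 : ℍ[ℝ]) * NormedSpace.exp (Qmk 0 0 0 (Real.pi / 2)) ∧
    (Qmk 0 1 0 0, Qmk (Real.pi / 2) 0 0 0) ≠ ((1 : ℍ[ℝ]), Qmk 0 (Real.pi / 2) 0 0) := by
  have hπ : Real.pi / 2 ≠ 0 := by positivity
  refine ⟨?_, ?_, ?_⟩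
  · rw [Quaternion.exp_of_re_eq_zero (Qmk 0 0 (Real.pi / 2) 0) (by simp [Qmk]), normq _ (by positivity)]
    ext <;> simp only [Quaternion.re_mul, Quaternion.imI_mul, Quaternion.imJ_mul, Quaternion.imK_mul, Quaternion.re_smul, Quaternion.imI_smul, Quaternion.imJ_smul, Quaternion.imK_smul, Quaternion.re_add, Quaternion.imI_add, Quaternion.imJ_add, Quaternion.imK_add, Quaternion.re_coe, Quaternion.imI_coe, Quaternion.imJ_coe, Quaternion.imK_coe] <;> simp [Qmk, Quaternion.ext_iff, Real.cos_pi_div_two, Real.sin_pi_div_two, hπ,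
      div_self Real.pi_ne_zero]
  · rw [Quaternion.exp_of_re_eq_zero (Qmk 0 0 0 (Real.pi / 2)) (by simp [Qmk]), normk _ (by positivity)]
    ext <;> simp only [Quaternion.re_mul, Quaternion.imI_mul, Quaternion.imJ_mul, Quaternion.imK_mul, Quaternion.re_smul, Quaternion.imI_smul, Quaternion.imJ_smul, Quaternion.imK_smul, Quaternion.re_add, Quaternion.imI_add, Quaternion.imJ_add, Quaternion.imK_add, Quaternion.re_coe, Quaternion.imI_coe, Quaternion.imJ_coe, Quaternion.imK_coe, one_mul] <;> simp [Qmk, Real.cos_pi_div_two, Real.sin_pi_div_two, hπ, div_self Real.pi_ne_zero]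
  · intro h
    have := congrArg (fun p => p.1.imI) h
    simp [Qmk] at this
end
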